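/- arXiv:1605.05743 — 2 statements merged into one kernel-verified Lean document; each statement's English description precedes it below -/
import Mathlib

section
/- Let X = {x₀, x₁, x₂, …} ⊂ ℝ where x₀ = 0 and xᵢ = −(1/4)ⁱ for i ≥ 1, equipped with the usual metric and usual order of ℝ. Define self-maps T and S of X by T(xᵢ) = xᵢ₊₂ and S(xᵢ) = xᵢ₊₁ for all i ∈ ℕ₀. Then: (a) T(X) ⊆ S(X); (b) T is S-increasing (Sx ≤ Sy implies Tx ≤ Ty); (c) |Tx − Ty| ≤ (1/4)·|Sx − Sy| for all x, y ∈ X; and (d) there is no x ∈ X with Sx = Tx, i.e. the pair (T,S) has no coincidence point (in particular no common fixed point). -/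
open Filter Topology

/-- A comparison function: `φ : [0,∞) → [0,∞)` increasing with `φ^[n] t → 0` for all `t > 0`. -/
def IsComparisonFn (φ : ℝ → ℝ) : Prop :=
  (∀ t, 0 ≤ t → 0 ≤ φ t) ∧
  (∀ s t, 0 ≤ s → s ≤ t → φ s ≤ φ t) ∧
  (∀ t, 0 < t → Tendsto (fun n => φ^[n] t) atTop (𝓝 0))

/-- A half-comparison function: a comparison function `ρ` such that `t ↦ ρ (2 t)`
is also a comparison function. -/
def IsHalfComparisonFn (ρ : ℝ → ℝ) : Prop :=
  IsComparisonFn ρ ∧ IsComparisonFn (fun t => ρ (2 * t))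

/-- Two elements are comparable in a preorder. -/
def CmpRel {X : Type*} [Preorder X] (a b : X) : Prop := a ≤ b ∨ b ≤ a

/-- `T` is `S`-increasing. -/
def SIncreasing {X : Type*} [Preorder X] (T S : X → X) : Prop :=
  ∀ x y, S x ≤ S y → T x ≤ T y

/-- `E` is `O̅`-complete: every increasing Cauchy sequence in `E` converges in `E`. -/
def OBarComplete {X : Type*} [MetricSpace X] [Preorder X] (E : Set X) : Prop :=
  ∀ u : ℕ → X, (∀ n, u n ∈ E) → Monotone u → CauchySeq u → ∃ z ∈ E, Tendsto u atTop (𝓝 z)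

/-- `(E,d,⪯)` is I-regular relative to `S`: every increasing sequence `{S xₙ}` in `E`
converging to some `S z` admits a subsequence whose terms are all comparable with `S z`,
and moreover `S z ⪯ S (S z)`. -/
def IRegularOn {X : Type*} [MetricSpace X] [Preorder X] (E : Set X) (S : X → X) : Prop :=
  ∀ (x : ℕ → X) (z : X), (∀ n, S (x n) ∈ E) → Monotone (fun n => S (x n)) →
    Tendsto (fun n => S (x n)) atTop (𝓝 (S z)) →
    ((∃ k : ℕ → ℕ, StrictMono k ∧ ∀ n, CmpRel (S (x (k n))) (S z)) ∧ S z ≤ S (S z))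

/-- The pair `(T,S)` is weakly compatible. -/
def WeaklyCompatible {X : Type*} (T S : X → X) : Prop :=
  ∀ x, S x = T x → S (T x) = T (S x)

/-- The set of coincidence points `C(T,S)` is `(T,S)`-directed. -/
def CoincTSDirected {X : Type*} [Preorder X] (T S : X → X) : Prop :=
  ∀ x y, S x = T x → S y = T y → ∃ z, CmpRel (T x) (S z) ∧ CmpRel (T y) (S z)

/-- The set of coincidence points `C(T,S)` is totally ordered by `⪯`. -/
def CoincTotallyOrdered {X : Type*} [Preorder X] (T S : X → X) : Prop :=
  ∀ x y, S x = T x → S y = T y → CmpRel x y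

/-- `T` is `(S,O̅)`-continuous. -/
def SOBarContinuous {X : Type*} [MetricSpace X] [Preorder X] (T S : X → X) : Prop :=
  ∀ (x : ℕ → X) (a : X), Monotone (fun n => S (x n)) →
    Tendsto (fun n => S (x n)) atTop (𝓝 (S a)) →
    Tendsto (fun n => T (x n)) atTop (𝓝 (T a))

/-- A self-map `f` is `O̅`-continuous. -/
def OBarContinuous {X : Type*} [MetricSpace X] [Preorder X] (f : X → X) : Prop :=
  ∀ (x : ℕ → X) (a : X), Monotone x → Tendsto x atTop (𝓝 a) →
    Tendsto (fun n => f (x n)) atTop (𝓝 (f a))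

/-- The pair `(T,S)` is `O̅`-compatible. -/
def OBarCompatible {X : Type*} [MetricSpace X] [Preorder X] (T S : X → X) : Prop :=
  ∀ (x : ℕ → X) (z : X), Monotone (fun n => S (x n)) → Monotone (fun n => T (x n)) →
    Tendsto (fun n => S (x n)) atTop (𝓝 z) → Tendsto (fun n => T (x n)) atTop (𝓝 z) →
    Tendsto (fun n => dist (S (T (x n))) (T (S (x n)))) atTop (𝓝 0)

/-- A comparable mapping maps comparable elements to comparable elements. -/
def ComparableMap {X : Type*} [Preorder X] (f : X → X) : Prop :=
  ∀ x y, CmpRel x y → CmpRel (f x) (f y)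

/-- Continuity of a 6-variable function on `[0,∞)⁶`. -/
def ContOnNonneg6 (F : ℝ → ℝ → ℝ → ℝ → ℝ → ℝ → ℝ) : Prop :=
  ContinuousOn
    (fun p : ℝ × ℝ × ℝ × ℝ × ℝ × ℝ => F p.1 p.2.1 p.2.2.1 p.2.2.2.1 p.2.2.2.2.1 p.2.2.2.2.2)
    (Set.Ici 0 ×ˢ Set.Ici 0 ×ˢ Set.Ici 0 ×ˢ Set.Ici 0 ×ˢ Set.Ici 0 ×ˢ Set.Ici 0)

/-- Condition (F1a): `F` is decreasing in the fifth variable and there is a comparison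
function `φ` such that `F(u,v,v,u,u+v,0) ≤ 0` implies `u ≤ φ v` for `u, v ≥ 0`. -/
def CondF1a (F : ℝ → ℝ → ℝ → ℝ → ℝ → ℝ → ℝ) : Prop :=
  (∀ t1 t2 t3 t4 t6, 0 ≤ t1 → 0 ≤ t2 → 0 ≤ t3 → 0 ≤ t4 → 0 ≤ t6 →
      AntitoneOn (fun t5 => F t1 t2 t3 t4 t5 t6) (Set.Ici 0)) ∧
  (∃ φ, IsComparisonFn φ ∧ ∀ u v, 0 ≤ u → 0 ≤ v → F u v v u (u + v) 0 ≤ 0 → u ≤ φ v)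

/-- Condition (F1b): `F` is decreasing in the fourth variable and there is a comparison
function `φ` such that `F(u,v,0,u+v,u,v) ≤ 0` implies `u ≤ φ v` for `u, v ≥ 0`. -/
def CondF1b (F : ℝ → ℝ → ℝ → ℝ → ℝ → ℝ → ℝ) : Prop :=
  (∀ t1 t2 t3 t5 t6, 0 ≤ t1 → 0 ≤ t2 → 0 ≤ t3 → 0 ≤ t5 → 0 ≤ t6 →
      AntitoneOn (fun t4 => F t1 t2 t3 t4 t5 t6) (Set.Ici 0)) ∧
  (∃ φ, IsComparisonFn φ ∧ ∀ u v, 0 ≤ u → 0 ≤ v → F u v 0 (u + v) u v ≤ 0 → u ≤ φ v)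

/-- Condition (F1c): `F` is decreasing in the third variable and there is a comparison
function `φ` such that `F(u,v,u+v,0,v,u) ≤ 0` implies `u ≤ φ v` for `u, v ≥ 0`. -/
def CondF1c (F : ℝ → ℝ → ℝ → ℝ → ℝ → ℝ → ℝ) : Prop :=
  (∀ t1 t2 t4 t5 t6, 0 ≤ t1 → 0 ≤ t2 → 0 ≤ t4 → 0 ≤ t5 → 0 ≤ t6 →
      AntitoneOn (fun t3 => F t1 t2 t3 t4 t5 t6) (Set.Ici 0)) ∧
  (∃ φ, IsComparisonFn φ ∧ ∀ u v, 0 ≤ u → 0 ≤ v → F u v (u + v) 0 v u ≤ 0 → u ≤ φ v)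

/-- Condition (F2): `F(u,u,0,0,u,u) > 0` for all `u > 0`. -/
def CondF2 (F : ℝ → ℝ → ℝ → ℝ → ℝ → ℝ → ℝ) : Prop :=
  ∀ u, 0 < u → 0 < F u u 0 0 u u


/-- The sequence `x₀ = 0`, `xᵢ = -(1/4)ⁱ` for `i ≥ 1`. -/
noncomputable def xseq : ℕ → ℝ := fun n => if n = 0 then 0 else -(1 / 4 : ℝ) ^ n

lemma xseq_succ (n : ℕ) : xseq (n + 1) = -(1 / 4 : ℝ) ^ (n + 1) := by
  simp [xseq]

lemma xseq_lt (i j : ℕ) (h : i < j) : xseq (i + 1) < xseq (j + 1) := by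
  rw [xseq_succ, xseq_succ, neg_lt_neg_iff]
  exact pow_lt_pow_right_of_lt_one₀ (by norm_num) (by norm_num) (by omega)

lemma xseq_le_iff (i j : ℕ) : xseq (i + 1) ≤ xseq (j + 1) ↔ i ≤ j := by
  constructor
  · intro h
    by_contra hc
    exact absurd (xseq_lt j i (by omega)) (not_lt.mpr h)
  · intro h
    rcases eq_or_lt_of_le h with rfl | h
    · exact le_rfl
    · exact (xseq_lt i j h).le

lemma mem_xseq (a : ↥(Set.range xseq)) : ∃ n : ℕ, a = ⟨xseq n, ⟨n, rfl⟩⟩ := by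
  obtain ⟨n, hn⟩ := a.2
  exact ⟨n, Subtype.ext hn.symm⟩

/-- the counterexample to Theorem 2 of Berinde–Vetro. For the maps
`T(xᵢ) = xᵢ₊₂` and `S(xᵢ) = xᵢ₊₁` on `X = {x₀, x₁, x₂, …}`:
(a) `T(X) ⊆ S(X)`; (b) `T` is `S`-increasing; (c) `|Tx − Ty| ≤ (1/4)·|Sx − Sy|`;
(d) the pair `(T,S)` has no coincidence point (hence no common fixed point). -/
theorem berinde_vetro_counterexample
    (T S : ↥(Set.range xseq) → ↥(Set.range xseq))
    (hT : ∀ n : ℕ, (T ⟨xseq n, ⟨n, rfl⟩⟩ : ℝ) = xseq (n + 2))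
    (hS : ∀ n : ℕ, (S ⟨xseq n, ⟨n, rfl⟩⟩ : ℝ) = xseq (n + 1)) :
    (Set.range T ⊆ Set.range S) ∧
    (∀ a b : ↥(Set.range xseq), (S a : ℝ) ≤ (S b : ℝ) → (T a : ℝ) ≤ (T b : ℝ)) ∧
    (∀ a b : ↥(Set.range xseq),
      |(T a : ℝ) - (T b : ℝ)| ≤ (1 / 4) * |(S a : ℝ) - (S b : ℝ)|) ∧
    (¬ ∃ a : ↥(Set.range xseq), S a = T a) := by
  
  refine ⟨?_, ?_, ?_, ?_⟩
  · rintro y ⟨a, rfl⟩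
    obtain ⟨n, rfl⟩ := mem_xseq a
    refine ⟨⟨xseq (n + 1), ⟨n + 1, rfl⟩⟩, ?_⟩
    apply Subtype.ext
    rw [hS (n + 1), hT n]
  · intro a b hab
    obtain ⟨m, rfl⟩ := mem_xseq a
    obtain ⟨n, rfl⟩ := mem_xseq b
    rw [hS m, hS n] at hab
    rw [hT m, hT n]
    have hmn : m ≤ n := (xseq_le_iff m n).mp hab
    exact (xseq_le_iff (m + 1) (n + 1)).mpr (by omega)
  · intro a b
    obtain ⟨m, rfl⟩ := mem_xseq a
    obtain ⟨n, rfl⟩ := mem_xseq b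
    rw [hT m, hT n, hS m, hS n, xseq_succ (m + 1), xseq_succ (n + 1), xseq_succ m, xseq_succ n]
    rw [show -(1/4:ℝ)^(m+1+1) - -(1/4:ℝ)^(n+1+1) = (1/4) * (-(1/4:ℝ)^(m+1) - -(1/4:ℝ)^(n+1)) by ring]
    rw [abs_mul]
    simp [abs_of_nonneg]
  · rintro ⟨a, ha⟩
    obtain ⟨n, rfl⟩ := mem_xseq a
    have := congrArg (Subtype.val) ha
    rw [hS n, hT n] at this
    exact absurd this (ne_of_lt (xseq_lt n (n + 1) (by omega)))
end

section
/- Let (X,d,⪯) be an ordered metric space and E an O̅-complete subset of X. Let T, S be self-maps of X with T(X) ⊆ E ⊆ S(X) and T S-increasing. Suppose there exists a continuous function F : [0,∞)⁶ → ℝ satisfying conditions (F1a) and (F2) such that F(d(Tx,Ty), d(Sx,Sy), d(Sx,Tx), d(Sy,Ty), d(Sx,Ty), d(Sy,Tx)) ≤ 0 for all x, y ∈ X with Sx ⪯ Sy. Assume: there exists x₀ ∈ X with Sx₀ ⪯ Tx₀; T is (S,O̅)-continuous; (T,S) is weakly compatible; C(T,S) is totally ordered by ⪯; and at least one of T, S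 is a comparable mapping. Then (T,S) has a unique common fixed point z, and for any x₀ with Sx₀ ⪯ Tx₀, every T-S-sequence {Txₙ} with initial point x₀ converges to z. -/
open Filter Topology

lemma iter_nonneg {φ : ℝ → ℝ} (h : IsComparisonFn φ) {t : ℝ} (ht : 0 ≤ t) (n : ℕ) :
    0 ≤ φ^[n] t := by
  induction n with
  | zero => simpa
  | succ n ih => rw [Function.iterate_succ_apply']; exact h.1 _ ih

lemma comp_lt {φ : ℝ → ℝ} (h : IsComparisonFn φ) {t : ℝ} (ht : 0 < t) : φ t < t := by
  by_contra hle
  push_neg at hle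
  have key : ∀ n, t ≤ φ^[n] t := by
    intro n
    induction n with
    | zero => simp
    | succ n ih =>
      rw [Function.iterate_succ_apply']
      exact hle.trans (h.2.1 _ _ ht.le ih)
  have := ge_of_tendsto (h.2.2 t ht) (Eventually.of_forall key)
  linarith

lemma comp_zero {φ : ℝ → ℝ} (h : IsComparisonFn φ) : φ 0 = 0 := by
  have h1 : ∀ t : ℝ, 0 < t → φ 0 < t := fun t ht =>
    lt_of_le_of_lt (h.2.1 0 t le_rfl ht.le) (comp_lt h ht)
  have h2 : φ 0 ≤ 0 := by
    by_contra hc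
    push_neg at hc
    exact absurd (h1 _ hc) (lt_irrefl _)
  exact le_antisymm h2 (h.1 0 le_rfl)

lemma comp_tendsto {φ : ℝ → ℝ} (h : IsComparisonFn φ) {t : ℝ} (ht : 0 ≤ t) :
    Tendsto (fun n => φ^[n] t) atTop (𝓝 0) := by
  rcases ht.lt_or_eq with ht' | ht'
  · exact h.2.2 t ht'
  · subst ht'
    have : ∀ n, φ^[n] (0:ℝ) = 0 := by
      intro n
      induction n with
      | zero => simp
      | succ n ih => rw [Function.iterate_succ_apply', ih, comp_zero h]
    simpa [this] using tendsto_const_nhds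

lemma coinc_eq {X : Type*} [MetricSpace X] [PartialOrder X] {T S : X → X}
    {F : ℝ → ℝ → ℝ → ℝ → ℝ → ℝ → ℝ} (hF2 : CondF2 F)
    (hcontr : ∀ x y, S x ≤ S y →
      F (dist (T x) (T y)) (dist (S x) (S y)) (dist (S x) (T x)) (dist (S y) (T y))
        (dist (S x) (T y)) (dist (S y) (T x)) ≤ 0)
    {a b : X} (ha : S a = T a) (hb : S b = T b) (hab : CmpRel (S a) (S b)) :
    S a = S b := by
  have key : ∀ c d : X, S c = T c → S d = T d → S c ≤ S d → S c = S d := by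
    intro c d hc hd hle
    have h := hcontr c d hle
    rw [← hc, ← hd, dist_self, dist_self, dist_comm (S d) (S c)] at h
    by_contra hne
    have hpos : 0 < dist (S c) (S d) := dist_pos.mpr hne
    exact absurd h (not_le.mpr (hF2 _ hpos))
  rcases hab with h | h
  · exact key a b ha hb h
  · exact (key b a hb ha h).symm

lemma key_seq {X : Type*} [MetricSpace X] [PartialOrder X]
    (E : Set X) (T S : X → X)
    (hTE : ∀ x, T x ∈ E) (hES : E ⊆ Set.range S) (hTS : SIncreasing T S)
    (F : ℝ → ℝ → ℝ → ℝ → ℝ → ℝ → ℝ) (hFc : ContOnNonneg6 F)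
    (hF1a : CondF1a F) (hF2 : CondF2 F)
    (hcontr : ∀ x y, S x ≤ S y →
      F (dist (T x) (T y)) (dist (S x) (S y)) (dist (S x) (T x)) (dist (S y) (T y))
        (dist (S x) (T y)) (dist (S y) (T x)) ≤ 0)
    (hE : OBarComplete E)
    (hScont : SOBarContinuous T S)
    (hwc : WeaklyCompatible T S)
    (htot : CoincTotallyOrdered T S)
    (hcmp : ComparableMap T ∨ ComparableMap S)
    (x : ℕ → X) (hx0 : S (x 0) ≤ T (x 0)) (hx : ∀ n, S (x (n + 1)) = T (x n)) :
    ∃ z, S z = z ∧ T z = z ∧ Tendsto (fun n => T (x n)) atTop (𝓝 z) := by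
  classical
  obtain ⟨hanti, φ, hφ, hφ1⟩ := hF1a
  -- monotonicity of S ∘ x
  have hstep : ∀ n, S (x n) ≤ S (x (n + 1)) := by
    intro n
    induction n with
    | zero => rw [hx 0]; exact hx0
    | succ n ih => rw [hx (n + 1), hx n]; exact hTS _ _ ih
  have hmono : Monotone (fun n => S (x n)) := monotone_nat_of_le_succ hstep
  set D : ℕ → ℝ := fun n => dist (S (x n)) (S (x (n + 1))) with hD
  -- consecutive contraction
  have hkey : ∀ n, D (n + 1) ≤ φ (D n) := by
    intro n
    have h := hcontr (x n) (x (n + 1)) (hstep n)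
    rw [← hx n, ← hx (n + 1), dist_self] at h
    set u := D (n + 1)
    set v := D n
    have htri : dist (S (x n)) (S (x (n + 2))) ≤ u + v := by
      have := dist_triangle (S (x n)) (S (x (n + 1))) (S (x (n + 2)))
      simp only [hD, u, v] at *
      linarith
    have h2 : F u v v u (u + v) 0 ≤ 0 := by
      have hA := hanti u v v u 0 dist_nonneg dist_nonneg dist_nonneg dist_nonneg le_rfl
      have := hA (Set.mem_Ici.mpr dist_nonneg) (Set.mem_Ici.mpr (by positivity)) htri
      exact le_trans this h
    exact hφ1 u v dist_nonneg dist_nonneg h2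
  -- D n → 0
  have hDiter : ∀ n, D n ≤ φ^[n] (D 0) := by
    intro n
    induction n with
    | zero => simp
    | succ n ih =>
      rw [Function.iterate_succ_apply']
      exact (hkey n).trans (hφ.2.1 _ _ dist_nonneg ih)
  have hD0 : Tendsto D atTop (𝓝 0) :=
    squeeze_zero (fun n => dist_nonneg) hDiter (comp_tendsto hφ dist_nonneg)
  -- Cauchy
  have hCauchy : CauchySeq (fun n => S (x n)) := by
    rw [Metric.cauchySeq_iff]
    by_contra hc
    push_neg at hc
    obtain ⟨ε, hε, hbad⟩ := hc
    have hsel : ∀ k : ℕ, ∃ n m : ℕ, k ≤ n ∧ n < m ∧ ε ≤ dist (S (x n)) (S (x m)) ∧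
        ∀ j, n < j → j < m → dist (S (x n)) (S (x j)) < ε := by
      intro k
      obtain ⟨p, hp, q, hq, hpq⟩ := hbad k
      have hne : p ≠ q := by
        intro h; rw [h, dist_self] at hpq; linarith
      have hdist : ε ≤ dist (S (x (min p q))) (S (x (max p q))) := by
        rcases le_total p q with h | h
        · rwa [min_eq_left h, max_eq_right h]
        · rw [min_eq_right h, max_eq_left h, dist_comm]; exact hpq
      have hex : ∃ m, min p q < m ∧ ε ≤ dist (S (x (min p q))) (S (x m)) :=
        ⟨max p q, min_lt_max.mpr hne, hdist⟩
      refine ⟨min p q, Nat.find hex, le_min hp hq, (Nat.find_spec hex).1,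
        (Nat.find_spec hex).2, ?_⟩
      intro j hj1 hj2
      have := Nat.find_min hex hj2
      push_neg at this
      exact this hj1
    choose nk mk h1 h2 h3 h4 using hsel
    -- b k → ε
    have hnk : Tendsto nk atTop atTop :=
      tendsto_atTop_mono h1 tendsto_id
    have hmk1 : Tendsto (fun k => mk k - 1) atTop atTop :=
      tendsto_atTop_mono (fun k => by have hA := h1 k; have hB := h2 k; simp only [id_eq]; omega) tendsto_id
    have hmk : Tendsto mk atTop atTop :=
      tendsto_atTop_mono (fun k => (h1 k).trans (h2 k).le) tendsto_id
    have hDnk : Tendsto (fun k => D (nk k)) atTop (𝓝 0) := hD0.comp hnk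
    have hDmk : Tendsto (fun k => D (mk k)) atTop (𝓝 0) := hD0.comp hmk
    have hDmk1 : Tendsto (fun k => D (mk k - 1)) atTop (𝓝 0) := hD0.comp hmk1
    set b : ℕ → ℝ := fun k => dist (S (x (nk k))) (S (x (mk k))) with hbdef
    have hub : ∀ k, b k ≤ ε + D (mk k - 1) := by
      intro k
      have hm1 : mk k - 1 + 1 = mk k := by have := h2 k; omega
      have htri : b k ≤ dist (S (x (nk k))) (S (x (mk k - 1))) + D (mk k - 1) := by
        have := dist_triangle (S (x (nk k))) (S (x (mk k - 1))) (S (x (mk k)))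
        simp only [hbdef, hD, hm1] at *
        linarith
      have hlt : dist (S (x (nk k))) (S (x (mk k - 1))) ≤ ε := by
        rcases Nat.lt_or_ge (nk k) (mk k - 1) with h | h
        · exact (h4 k _ h (by omega)).le
        · have : mk k - 1 = nk k := by have := h2 k; omega
          rw [this, dist_self]; exact hε.le
      linarith
    have hb : Tendsto b atTop (𝓝 ε) := by
      refine tendsto_of_tendsto_of_tendsto_of_le_of_le (g := fun _ => ε)
        (h := fun k => ε + D (mk k - 1)) tendsto_const_nhds ?_ (fun k => h3 k) hub
      simpa using (tendsto_const_nhds (x := ε) (f := atTop)).add hDmk1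
    -- the other three sequences
    set a : ℕ → ℝ := fun k => dist (S (x (nk k + 1))) (S (x (mk k + 1))) with hadef
    set c : ℕ → ℝ := fun k => dist (S (x (nk k))) (S (x (mk k + 1))) with hcdef
    set e : ℕ → ℝ := fun k => dist (S (x (mk k))) (S (x (nk k + 1))) with hedef
    have ha : Tendsto a atTop (𝓝 ε) := by
      have hbound : ∀ k, ‖a k - b k‖ ≤ D (nk k) + D (mk k) := by
        intro k
        have := dist_dist_dist_le (S (x (nk k + 1))) (S (x (mk k + 1)))
          (S (x (nk k))) (S (x (mk k)))
        rw [Real.dist_eq] at this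
        calc ‖a k - b k‖ ≤ dist (S (x (nk k + 1))) (S (x (nk k)))
            + dist (S (x (mk k + 1))) (S (x (mk k))) := this
          _ = D (nk k) + D (mk k) := by rw [dist_comm, dist_comm (S (x (mk k + 1)))]
      have h0 : Tendsto (fun k => a k - b k) atTop (𝓝 0) :=
        squeeze_zero_norm hbound (by simpa using hDnk.add hDmk)
      have := h0.add hb
      simpa using this
    have hc' : Tendsto c atTop (𝓝 ε) := by
      have hbound : ∀ k, ‖c k - b k‖ ≤ D (mk k) := by
        intro k
        have := abs_dist_sub_le (S (x (mk k + 1))) (S (x (mk k))) (S (x (nk k)))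
        calc ‖c k - b k‖ = |dist (S (x (mk k + 1))) (S (x (nk k)))
              - dist (S (x (mk k))) (S (x (nk k)))| := by
              rw [dist_comm (S (x (mk k + 1))), dist_comm (S (x (mk k)))]; rfl
          _ ≤ dist (S (x (mk k + 1))) (S (x (mk k))) := this
          _ = D (mk k) := by rw [dist_comm]
      have h0 : Tendsto (fun k => c k - b k) atTop (𝓝 0) := squeeze_zero_norm hbound hDmk
      have := h0.add hb
      simpa using this
    have he : Tendsto e atTop (𝓝 ε) := by
      have hbound : ∀ k, ‖e k - b k‖ ≤ D (nk k) := by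
        intro k
        have := abs_dist_sub_le (S (x (nk k + 1))) (S (x (nk k))) (S (x (mk k)))
        calc ‖e k - b k‖ = |dist (S (x (nk k + 1))) (S (x (mk k)))
              - dist (S (x (nk k))) (S (x (mk k)))| := by
              rw [hedef]; simp only []; rw [dist_comm (S (x (mk k)))]; rfl
          _ ≤ dist (S (x (nk k + 1))) (S (x (nk k))) := this
          _ = D (nk k) := by rw [dist_comm]
      have h0 : Tendsto (fun k => e k - b k) atTop (𝓝 0) := squeeze_zero_norm hbound hDnk
      have := h0.add hb
      simpa using this
    -- contraction along subsequences
    have hcontr' : ∀ k, F (a k) (b k) (D (nk k)) (D (mk k)) (c k) (e k) ≤ 0 := by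
      intro k
      have h := hcontr (x (nk k)) (x (mk k)) (hmono (h2 k).le)
      rw [← hx (nk k), ← hx (mk k)] at h
      exact h
    -- pass to the limit using continuity of F
    set G := fun p : ℝ × ℝ × ℝ × ℝ × ℝ × ℝ => F p.1 p.2.1 p.2.2.1 p.2.2.2.1 p.2.2.2.2.1 p.2.2.2.2.2
    set s : Set (ℝ × ℝ × ℝ × ℝ × ℝ × ℝ) :=
      Set.Ici 0 ×ˢ Set.Ici 0 ×ˢ Set.Ici 0 ×ˢ Set.Ici 0 ×ˢ Set.Ici 0 ×ˢ Set.Ici 0 with hsdef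
    have hptmem : ((ε, ε, 0, 0, ε, ε) : ℝ × ℝ × ℝ × ℝ × ℝ × ℝ) ∈ s := by
      simp only [hsdef, Set.mem_prod, Set.mem_Ici]
      exact ⟨hε.le, hε.le, le_rfl, le_rfl, hε.le, hε.le⟩
    set p : ℕ → ℝ × ℝ × ℝ × ℝ × ℝ × ℝ :=
      fun k => (a k, b k, D (nk k), D (mk k), c k, e k) with hpdef
    have hp : Tendsto p atTop (𝓝 (ε, ε, 0, 0, ε, ε)) :=
      ha.prodMk_nhds (hb.prodMk_nhds (hDnk.prodMk_nhds (hDmk.prodMk_nhds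
        (hc'.prodMk_nhds he))))
    have hpmem : ∀ k, p k ∈ s := by
      intro k
      simp only [hsdef, hpdef, Set.mem_prod, Set.mem_Ici]
      exact ⟨dist_nonneg, dist_nonneg, dist_nonneg, dist_nonneg, dist_nonneg, dist_nonneg⟩
    have hGt : Tendsto (fun k => G (p k)) atTop (𝓝 (F ε ε 0 0 ε ε)) := by
      have hcw := (hFc _ hptmem).tendsto
      exact hcw.comp (tendsto_nhdsWithin_iff.mpr ⟨hp, Eventually.of_forall hpmem⟩)
    have hle : F ε ε 0 0 ε ε ≤ 0 :=
      le_of_tendsto hGt (Eventually.of_forall fun k => hcontr' k)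
    exact absurd hle (not_le.mpr (hF2 ε hε))
  -- convergence
  have hmemE : ∀ n, S (x (n + 1)) ∈ E := fun n => (hx n) ▸ hTE (x n)
  have hCauchy' : CauchySeq (fun n => S (x (n + 1))) := by
    rw [Metric.cauchySeq_iff] at hCauchy ⊢
    intro δ hδ
    obtain ⟨N, hN⟩ := hCauchy δ hδ
    exact ⟨N, fun m hm n hn => hN (m + 1) (by omega) (n + 1) (by omega)⟩
  have hmono' : Monotone (fun n => S (x (n + 1))) := fun i j h => hmono (by omega)
  obtain ⟨z', hz'E, hz'⟩ := hE _ hmemE hmono' hCauchy'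
  have hy : Tendsto (fun n => S (x n)) atTop (𝓝 z') :=
    (tendsto_add_atTop_iff_nat 1).mp hz'
  obtain ⟨v, hv⟩ := hES hz'E
  have hTx : Tendsto (fun n => T (x n)) atTop (𝓝 (T v)) :=
    hScont x v hmono (hv ▸ hy)
  have hTxz' : Tendsto (fun n => T (x n)) atTop (𝓝 z') := by
    have : (fun n => T (x n)) = fun n => S (x (n + 1)) := by
      funext n; exact (hx n).symm
    rw [this]; exact hz'
  have hcoinc : S v = T v := hv.trans (tendsto_nhds_unique hTxz' hTx)
  -- common fixed point
  set w := T v with hwdef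
  have hw : S w = T w := by
    have := hwc v hcoinc
    rw [hwdef, this, hcoinc]
  have hvw : CmpRel v w := htot v w hcoinc hw
  have hSvw : CmpRel (S v) (S w) := by
    rcases hcmp with hT | hS
    · have h' := hT v w hvw
      rw [← hwdef, ← hw] at h'
      rw [hcoinc]
      exact h'
    · exact hS v w hvw
  have hSeq : S v = S w := coinc_eq hF2 hcontr hcoinc hw hSvw
  have hSw : S w = w := by rw [← hSeq, hcoinc]
  have hTw : T w = w := by rw [← hw, hSw]
  exact ⟨w, hSw, hTw, hTx⟩

/-- unique common fixed point with `(S,O̅)`-continuity of `T`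
(Theorem 3.3, case (i)). -/
theorem unique_cfp_SOBar {X : Type*} [MetricSpace X] [PartialOrder X]
    (E : Set X) (T S : X → X)
    (hTE : ∀ x, T x ∈ E) (hES : E ⊆ Set.range S) (hTS : SIncreasing T S)
    (F : ℝ → ℝ → ℝ → ℝ → ℝ → ℝ → ℝ) (hFc : ContOnNonneg6 F)
    (hF1a : CondF1a F) (hF2 : CondF2 F)
    (hcontr : ∀ x y, S x ≤ S y →
      F (dist (T x) (T y)) (dist (S x) (S y)) (dist (S x) (T x)) (dist (S y) (T y))
        (dist (S x) (T y)) (dist (S y) (T x)) ≤ 0)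
    (hx0 : ∃ x₀, S x₀ ≤ T x₀)
    (hE : OBarComplete E)
    (hScont : SOBarContinuous T S)
    (hwc : WeaklyCompatible T S)
    (htot : CoincTotallyOrdered T S)
    (hcmp : ComparableMap T ∨ ComparableMap S) :
    ∃ z, S z = z ∧ T z = z ∧ (∀ w, S w = w → T w = w → w = z) ∧
      ∀ x : ℕ → X, S (x 0) ≤ T (x 0) → (∀ n, S (x (n + 1)) = T (x n)) →
        Tendsto (fun n => T (x n)) atTop (𝓝 z) := by
  classical
  have huniq : ∀ p q, S p = p → T p = p → S q = q → T q = q → p = q := by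
    intro p q hp1 hp2 hq1 hq2
    have hp : S p = T p := by rw [hp1, hp2]
    have hq : S q = T q := by rw [hq1, hq2]
    have hpq : CmpRel p q := htot p q hp hq
    have hSpq : CmpRel (S p) (S q) := by
      rcases hcmp with hT | hS
      · have := hT p q hpq; rwa [← hp, ← hq] at this
      · exact hS p q hpq
    have := coinc_eq hF2 hcontr hp hq hSpq
    rwa [hp1, hq1] at this
  obtain ⟨x₀, hx₀⟩ := hx0
  have hgex : ∀ t : X, ∃ y, S y = T t := fun t => hES (hTE t)
  choose g hgspec using hgex
  have hseq : ∀ n, S (g^[n + 1] x₀) = T (g^[n] x₀) := by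
    intro n
    rw [Function.iterate_succ_apply' g n x₀, hgspec]
  have hseq0 : S (g^[0] x₀) ≤ T (g^[0] x₀) := by simpa using hx₀
  obtain ⟨z, hz1, hz2, hz3⟩ := key_seq E T S hTE hES hTS F hFc hF1a hF2 hcontr hE hScont
    hwc htot hcmp (fun n => g^[n] x₀) hseq0 hseq
  refine ⟨z, hz1, hz2, fun w hw1 hw2 => huniq w z hw1 hw2 hz1 hz2, ?_⟩
  intro x hx0' hx'
  obtain ⟨z', hz1', hz2', hz3'⟩ := key_seq E T S hTE hES hTS F hFc hF1a hF2 hcontr hE hScont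
    hwc htot hcmp x hx0' hx'
  rwa [huniq z' z hz1' hz2' hz1 hz2] at hz3'
end
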